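/- For every ε > 0, the set Ω_ε = { p ∈ ℝ^d : p_1 = 1, p_i > 0 for all i, and min_{w ∈ W_d} G(p,w) ≥ ε } is a compact subset of ℝ^d. -/
import Mathlib


def wvec (d : ℕ) (j : Fin d) : Fin d → ℕ :=
  fun i => if i < j then 0 else if i = j then (j : ℕ) + 1 else (i : ℕ)

noncomputable def G (d : ℕ) (p : Fin d → ℝ) (w : Fin d → ℕ) : ℝ :=
  (∏ i, p i) / (Real.sqrt (∑ i, ((w i : ℝ)) ^ 2 * p i ^ 2)) ^ d

noncomputable def minG (d : ℕ) (p : Fin d → ℝ) : ℝ :=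
  ⨅ j : Fin d, G d p (wvec d j)

noncomputable def D (d : ℕ) (j : Fin d) (p : Fin d → ℝ) : ℝ :=
  Real.sqrt (∑ i, ((wvec d j i : ℝ)) ^ 2 * p i ^ 2)

/-- `p*`: `p*_1 = 1`, `p*_2 = 1/√3`, `p*_j = √(2/3)/(j−1)` for `3 ≤ j ≤ d`
(0-based: index `i` has 1-based position `i+1`, so the denominator `j−1` is `i`). -/
noncomputable def pstar (d : ℕ) : Fin d → ℝ :=
  fun i => if (i : ℕ) = 0 then 1 else if (i : ℕ) = 1 then 1 / Real.sqrt 3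
    else Real.sqrt (2 / 3) / ((i : ℕ) : ℝ)

/-- Key bounds: if `p ∈ Ω_ε` then every coordinate lies in `[ε, 1/ε]`. -/
lemma mem_box (d : ℕ) (hd : 2 ≤ d) (ε : ℝ) (hε : 0 < ε) (p : Fin d → ℝ)
    (j0 : Fin d) (hj0 : (j0 : ℕ) = 0) (h0 : p j0 = 1) (hp : ∀ i, 0 < p i)
    (hG : ε ≤ G d p (wvec d j0)) (i : Fin d) : p i ∈ Set.Icc ε (1/ε) := by
  set s : ℝ := ∑ i, ((wvec d j0 i : ℝ)) ^ 2 * p i ^ 2 with hs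
  set Dv : ℝ := Real.sqrt s with hDv
  have hwge : ∀ i : Fin d, 1 ≤ wvec d j0 i := by
    intro i
    unfold wvec
    rcases eq_or_ne i j0 with h | h
    · simp [h]
    · have hi : (i : ℕ) ≠ 0 := by
        intro hc
        exact h (Fin.ext (hc.trans hj0.symm))
      have h1 : ¬ i < j0 := by
        intro hc
        have := Fin.lt_def.mp hc
        omega
      simp only [if_neg h1, if_neg h]
      omega
  have hw : ∀ i : Fin d, (1:ℝ) ≤ ((wvec d j0 i : ℝ)) ^ 2 := by
    intro i
    have h1 : (1:ℝ) ≤ (wvec d j0 i : ℝ) := by exact_mod_cast hwge i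
    nlinarith
  have hps : ∀ i, p i ^ 2 ≤ s := by
    intro i
    calc p i ^ 2 = 1 * p i ^ 2 := (one_mul _).symm
      _ ≤ ((wvec d j0 i : ℝ)) ^ 2 * p i ^ 2 :=
          mul_le_mul_of_nonneg_right (hw i) (sq_nonneg _)
      _ ≤ s := hs ▸ Finset.single_le_sum
          (f := fun k => ((wvec d j0 k : ℝ)) ^ 2 * p k ^ 2)
          (fun k _ => by positivity) (Finset.mem_univ i)
  have hpD : ∀ i, p i ≤ Dv := by
    intro i
    have h := Real.sqrt_le_sqrt (hps i)
    rwa [Real.sqrt_sq (hp i).le] at h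
  have hD1 : (1:ℝ) ≤ Dv := h0 ▸ hpD j0
  have hDpos : 0 < Dv := lt_of_lt_of_le one_pos hD1
  have hP : ε * Dv ^ d ≤ ∏ k, p k := by
    have hG' := hG
    rw [G] at hG'
    rw [le_div_iff₀ (pow_pos hDpos d)] at hG'
    linarith
  have hkey : ∀ k, ε * Dv ≤ p k := by
    intro k
    have h1 : (∏ i, p i) ≤ p k * Dv ^ (d - 1) := by
      rw [← Finset.mul_prod_erase Finset.univ p (Finset.mem_univ k)]
      refine mul_le_mul_of_nonneg_left ?_ (hp k).le
      calc ∏ i ∈ Finset.univ.erase k, p i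
          ≤ ∏ i ∈ Finset.univ.erase k, Dv :=
            Finset.prod_le_prod (fun i _ => (hp i).le) (fun i _ => hpD i)
        _ = Dv ^ (d - 1) := by
            rw [Finset.prod_const, Finset.card_erase_of_mem (Finset.mem_univ k)]
            simp
    have h2 : ε * Dv ^ d ≤ p k * Dv ^ (d - 1) := le_trans hP h1
    have h3 : Dv ^ d = Dv ^ (d - 1) * Dv := by
      rw [← pow_succ]
      congr 1
      omega
    have h4 : 0 < Dv ^ (d - 1) := pow_pos hDpos _
    have h5 : ε * Dv * Dv ^ (d - 1) ≤ p k * Dv ^ (d - 1) := by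
      calc ε * Dv * Dv ^ (d - 1) = ε * Dv ^ d := by rw [h3]; ring
        _ ≤ p k * Dv ^ (d - 1) := h2
    exact le_of_mul_le_mul_right h5 h4
  constructor
  · calc ε = ε * 1 := (mul_one ε).symm
      _ ≤ ε * Dv := by nlinarith
      _ ≤ p i := hkey i
  · have hεD : ε * Dv ≤ 1 := h0 ▸ hkey j0
    have hD : Dv ≤ 1 / ε := by
      rw [le_div_iff₀ hε]
      nlinarith
    exact le_trans (hpD i) hD

/-- For every `ε > 0`, the set
`Ω_ε = {p : p_1 = 1, p_i > 0 ∀i, min_{w ∈ W_d} G(p,w) ≥ ε}` is compact. -/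
theorem stmt4 (d : ℕ) (hd : 2 ≤ d) (ε : ℝ) (hε : 0 < ε) :
    IsCompact {p : Fin d → ℝ | p ⟨0, by omega⟩ = 1 ∧ (∀ i, 0 < p i) ∧ ε ≤ minG d p} := by
  have hd0 : 0 < d := by omega
  let j0 : Fin d := ⟨0, by omega⟩
  have hj0 : (j0 : ℕ) = 0 := rfl
  haveI : Nonempty (Fin d) := ⟨j0⟩
  set K : Set (Fin d → ℝ) := Set.pi Set.univ (fun _ => Set.Icc ε (1/ε)) with hKdef
  have hKcomp : IsCompact K := isCompact_univ_pi (fun _ => isCompact_Icc)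
  have hKclosed : IsClosed K := hKcomp.isClosed
  have hcont : ∀ j : Fin d, ContinuousOn (fun p : Fin d → ℝ => G d p (wvec d j)) K := by
    intro j
    unfold G
    apply ContinuousOn.div
    · exact (continuous_finset_prod _ (fun i _ => continuous_apply i)).continuousOn
    · exact ((Real.continuous_sqrt.comp (continuous_finset_sum _
        (fun i _ => continuous_const.mul ((continuous_apply i).pow 2)))).pow d).continuousOn
    · intro p hpK
      have hpj : 0 < p j := lt_of_lt_of_le hε (hpK j (Set.mem_univ j)).1
      have hsum : 0 < ∑ i, ((wvec d j i : ℝ)) ^ 2 * p i ^ 2 := by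
        refine Finset.sum_pos' (fun i _ => by positivity) ⟨j, Finset.mem_univ j, ?_⟩
        have hwjj : wvec d j j = (j : ℕ) + 1 := by simp [wvec]
        rw [hwjj]
        have hc : (0:ℝ) < (((j : ℕ) + 1 : ℕ) : ℝ) := by exact_mod_cast Nat.succ_pos (j : ℕ)
        exact mul_pos (pow_pos hc 2) (pow_pos hpj 2)
      exact pow_ne_zero d (ne_of_gt (Real.sqrt_pos.mpr hsum))
  have hSeq : {p : Fin d → ℝ | p ⟨0, by omega⟩ = 1 ∧ (∀ i, 0 < p i) ∧ ε ≤ minG d p}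
      = {p : Fin d → ℝ | p j0 = 1} ∩
        ⋂ j : Fin d, (K ∩ {p : Fin d → ℝ | ε ≤ G d p (wvec d j)}) := by
    ext p
    simp only [Set.mem_setOf_eq, Set.mem_inter_iff, Set.mem_iInter]
    constructor
    · rintro ⟨h0, hp, hm⟩
      have hbb : BddBelow (Set.range (fun j : Fin d => G d p (wvec d j))) :=
        (Set.finite_range _).bddBelow
      have hGj : ∀ j, ε ≤ G d p (wvec d j) := fun j => le_trans hm (ciInf_le hbb j)
      have hbox : ∀ i, p i ∈ Set.Icc ε (1/ε) :=
        mem_box d hd ε hε p j0 hj0 h0 hp (hGj j0)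
      exact ⟨h0, fun j => ⟨fun i _ => hbox i, hGj j⟩⟩
    · rintro ⟨h0, hj⟩
      have hK0 := (hj j0).1
      have hp : ∀ i, 0 < p i := fun i => lt_of_lt_of_le hε (hK0 i (Set.mem_univ i)).1
      exact ⟨h0, hp, le_ciInf (fun j => (hj j).2)⟩
  rw [hSeq]
  have hc1 : IsClosed {p : Fin d → ℝ | p j0 = 1} :=
    isClosed_eq (continuous_apply j0) continuous_const
  have hclosedT : IsClosed ({p : Fin d → ℝ | p j0 = 1} ∩
      ⋂ j : Fin d, (K ∩ {p : Fin d → ℝ | ε ≤ G d p (wvec d j)})) := by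
    refine hc1.inter (isClosed_iInter (fun j => ?_))
    exact (hcont j).preimage_isClosed_of_isClosed hKclosed isClosed_Ici
  have hsub : ({p : Fin d → ℝ | p j0 = 1} ∩
      ⋂ j : Fin d, (K ∩ {p : Fin d → ℝ | ε ≤ G d p (wvec d j)})) ⊆ K :=
    fun p hp => (Set.mem_iInter.mp hp.2 j0).1
  exact hKcomp.of_isClosed_subset hclosedT hsub
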